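/- For the site random-cluster measure ψ on subsets Y of the vertex set of a finite graph of maximal degree Δ, with weight ∝ 2^{k(Y)} p^{#Y} (1−p)^{#(V∖Y)}, the single-site conditional probability that i ∈ Y given Y∖{i} equals p / (p + (1−p)·2^{κ(i,Y)−1}), where κ(i,Y) is the number of clusters of Y∖{i} meeting the neighborhood of i. Consequently ψ is stochastically dominated by Bernoulli site percolation with parameter p* = p/(p+(1−p)/2) and stochastically dominates Bernoulli site percolation with parameter p_* = p/(p+(1−p)2^{Δ−1}). -/

import Mathlib

open Finset

namespace SiteRC

variable {V : Type*} [Fintype V] [DecidableEq V]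

/-- The number of connected components of the subgraph of `G` induced on `Y`. -/
noncomputable def numClusters (G : SimpleGraph V) (Y : Finset V) : ℕ :=
  Nat.card (SimpleGraph.induce (↑Y : Set V) G).ConnectedComponent

/-- The site random-cluster weight `2^{k(Y)} p^{#Y} (1-p)^{#(V∖Y)}`. -/
noncomputable def siteWeight (G : SimpleGraph V) (p : ℝ) (Y : Finset V) : ℝ :=
  2 ^ numClusters G Y * p ^ Y.card * (1 - p) ^ (Fintype.card V - Y.card)

/-- `κ(i, Y)`: the number of clusters of `Y ∖ {i}` meeting the neighbourhood of `i`. -/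
noncomputable def kappa (G : SimpleGraph V) (i : V) (Y : Finset V) : ℕ :=
  Nat.card {C : (SimpleGraph.induce (↑(Y.erase i) : Set V) G).ConnectedComponent //
    ∃ y : (↑(Y.erase i) : Set V), G.Adj i ↑y ∧
      (SimpleGraph.induce (↑(Y.erase i) : Set V) G).connectedComponentMk y = C}

/-- The Bernoulli site percolation weight with parameter `q`. -/
def bernoulliSiteWeight (q : ℝ) (Y : Finset V) : ℝ :=
  q ^ Y.card * (1 - q) ^ (Fintype.card V - Y.card)

set_option linter.unusedSectionVars false
set_option linter.unusedVariables false

open SimpleGraph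

section Graph

variable (G : SimpleGraph V) (i : V) (A : Finset V)

noncomputable def kappa' (G : SimpleGraph V) (i : V) (A : Finset V) : ℕ :=
  Nat.card {C : (SimpleGraph.induce (↑A : Set V) G).ConnectedComponent //
    ∃ y : (↑A : Set V), G.Adj i ↑y ∧
      (SimpleGraph.induce (↑A : Set V) G).connectedComponentMk y = C}

/-- inclusion hom from the graph induced on `A` to the graph induced on `insert i A`. -/
def incHom : (SimpleGraph.induce (↑A : Set V) G) →g
    (SimpleGraph.induce (↑(insert i A) : Set V) G) :=
  ⟨Set.inclusion (by intro x hx; simp only [Finset.coe_insert, Set.mem_insert_iff,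
      Finset.mem_coe] at *; exact Or.inr hx), fun {a b} h => h⟩

lemma transfer_walk : ∀ {u v : (↑(insert i A) : Set V)}
    (W : (SimpleGraph.induce (↑(insert i A) : Set V) G).Walk u v),
    (∀ x ∈ W.support, (x : V) ≠ i) →
    ∀ (hu : (u : V) ∈ (↑A : Set V)) (hv : (v : V) ∈ (↑A : Set V)),
    (SimpleGraph.induce (↑A : Set V) G).Reachable ⟨u, hu⟩ ⟨v, hv⟩ := by
  intro u v W
  induction W with
  | nil =>
    intro _ hu hv
    exact Reachable.refl _
  | cons h W ih =>
    rename_i a b c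
    intro hsup hu hv
    have hb : (b : V) ≠ i := by
      apply hsup
      rw [Walk.support_cons]
      exact List.mem_cons_of_mem _ W.start_mem_support
    have hbA : (b : V) ∈ (↑A : Set V) := by
      have := b.2
      simp only [Finset.coe_insert, Set.mem_insert_iff, Finset.mem_coe] at this ⊢
      tauto
    have ih' := ih (fun x hx => hsup x (by
      rw [Walk.support_cons]
      exact List.mem_cons_of_mem _ hx)) hbA hv
    exact Reachable.trans (Adj.reachable (by exact h)) ih'

lemma reach_from_i (hi : i ∉ A) :
    ∀ (n : ℕ) (u z : (↑(insert i A) : Set V))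
      (W : (SimpleGraph.induce (↑(insert i A) : Set V) G).Walk u z),
      W.length ≤ n → (u : V) = i → ∀ (hz : (z : V) ∈ (↑A : Set V)),
      ∃ y : (↑A : Set V), G.Adj i ↑y ∧
        (SimpleGraph.induce (↑A : Set V) G).connectedComponentMk y =
          (SimpleGraph.induce (↑A : Set V) G).connectedComponentMk ⟨z, hz⟩ := by
  intro n
  induction n with
  | zero =>
    intro u z W hlen hu hz
    interval_cases h : W.length
    · have := W.eq_of_length_eq_zero h
      subst this
      rw [hu] at hz
      exact (hi (Finset.mem_coe.1 hz)).elim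
  | succ n ih =>
    intro u z W hlen hu hz
    cases W with
    | nil =>
      exfalso
      rw [hu] at hz
      simp at hz
      exact hi hz
    | cons h W' =>
      rename_i b
      by_cases hmem : ∃ hbm : i ∈ (↑(insert i A) : Set V), (⟨i, hbm⟩ : (↑(insert i A) : Set V)) ∈ W'.support
      · obtain ⟨hbm, hmem⟩ := hmem
        have hlen' : (W'.dropUntil _ hmem).length ≤ n := by
          have h1 := W'.length_dropUntil_le hmem
          simp only [Walk.length_cons] at hlen
          omega
        exact ih _ z (W'.dropUntil _ hmem) hlen' rfl hz
      · push_neg at hmem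
        have hbm : i ∈ (↑(insert i A) : Set V) := by simp
        have hnoti : ∀ x ∈ W'.support, (x : V) ≠ i := by
          intro x hx hxe
          exact hmem hbm (by rwa [show (⟨i, hbm⟩ : (↑(insert i A) : Set V)) = x from Subtype.ext hxe.symm])
        have hbne : (b : V) ≠ i := hnoti b W'.start_mem_support
        have hbA : (b : V) ∈ (↑A : Set V) := by
          have := b.2
          simp only [Finset.coe_insert, Set.mem_insert_iff, Finset.mem_coe] at this ⊢
          tauto
        refine ⟨⟨b, hbA⟩, ?_, ?_⟩
        · have : G.Adj ↑u ↑b := h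
          rwa [hu] at this
        · rw [SimpleGraph.ConnectedComponent.eq]
          exact transfer_walk G i A W' hnoti hbA hz

lemma reach_to_i_of_touch (hi : i ∉ A) (x : (↑A : Set V))
    (y : (↑A : Set V)) (hadj : G.Adj i ↑y)
    (hreach : (SimpleGraph.induce (↑A : Set V) G).Reachable y x) :
    (SimpleGraph.induce (↑(insert i A) : Set V) G).Reachable (incHom G i A x)
      ⟨i, by simp⟩ := by
  have h1 : (SimpleGraph.induce (↑(insert i A) : Set V) G).Reachable
      (incHom G i A x) (incHom G i A y) := (hreach.symm).map (incHom G i A)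
  refine h1.trans (Adj.reachable ?_).symm
  show G.Adj i ↑((incHom G i A) y)
  exact hadj

lemma count_eq (hi : i ∉ A) :
    numClusters G (insert i A) + kappa' G i A = numClusters G A + 1 := by
  classical
  set H0 := SimpleGraph.induce (↑A : Set V) G with hH0
  set H1 := SimpleGraph.induce (↑(insert i A) : Set V) G with hH1
  set f := incHom G i A with hf
  have him : i ∈ (↑(insert i A) : Set V) := by simp
  set i' : (↑(insert i A) : Set V) := ⟨i, him⟩ with hi'
  set Ci : H1.ConnectedComponent := H1.connectedComponentMk i' with hCi
  set touch : H0.ConnectedComponent → Prop :=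
    (fun C => ∃ y : (↑A : Set V), G.Adj i ↑y ∧ H0.connectedComponentMk y = C) with htouch
  set φ : H0.ConnectedComponent → H1.ConnectedComponent := ConnectedComponent.map f with hφ
  -- the key characterisation
  have key : ∀ x : (↑A : Set V),
      (φ (H0.connectedComponentMk x) = Ci ↔ touch (H0.connectedComponentMk x)) := by
    intro x
    rw [hφ, ConnectedComponent.map_mk, hCi, ConnectedComponent.eq]
    constructor
    · intro hr
      obtain ⟨W⟩ := hr
      obtain ⟨y, hadj, hmk⟩ :=
        reach_from_i G i A hi W.reverse.length i' (f x) W.reverse le_rfl rfl x.2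
      exact ⟨y, hadj, hmk.trans (congrArg _ (Subtype.ext rfl))⟩
    · rintro ⟨y, hadj, hmk⟩
      exact reach_to_i_of_touch G i A hi x y hadj
        ((ConnectedComponent.eq.1 hmk))
  -- injectivity of φ on non-touching components
  have hinj : ∀ x x' : (↑A : Set V), ¬ touch (H0.connectedComponentMk x) →
      φ (H0.connectedComponentMk x) = φ (H0.connectedComponentMk x') →
      H0.connectedComponentMk x = H0.connectedComponentMk x' := by
    intro x x' hnt h
    rw [hφ, ConnectedComponent.map_mk, ConnectedComponent.map_mk,
      ConnectedComponent.eq] at h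
    obtain ⟨W⟩ := h
    by_cases hmem : i' ∈ W.support
    · exfalso
      apply hnt
      rw [← key x, hφ, ConnectedComponent.map_mk, hCi, ConnectedComponent.eq]
      exact ⟨W.takeUntil i' hmem⟩
    · have hnoti : ∀ z ∈ W.support, (z : V) ≠ i := by
        intro z hz hze
        exact hmem (by rwa [show i' = z from Subtype.ext hze.symm])
      rw [ConnectedComponent.eq]
      have := transfer_walk G i A W hnoti x.2 x'.2
      convert this using 2 <;> exact Subtype.ext rfl
  -- the bijection
  have hCine : ∀ C : {C : H0.ConnectedComponent // ¬ touch C}, φ C.1 ≠ Ci := by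
    rintro ⟨C, hC⟩ h
    obtain ⟨x, rfl⟩ := C.exists_rep
    exact hC ((key x).1 h)
  let g : {C : H0.ConnectedComponent // ¬ touch C} → {D : H1.ConnectedComponent // D ≠ Ci} :=
    fun C => ⟨φ C.1, hCine C⟩
  have hgbij : Function.Bijective g := by
    constructor
    · rintro ⟨C, hC⟩ ⟨C', hC'⟩ h
      simp only [g, Subtype.mk.injEq] at h
      obtain ⟨x, rfl⟩ := C.exists_rep
      obtain ⟨x', rfl⟩ := C'.exists_rep
      exact Subtype.ext (hinj x x' hC h)
    · rintro ⟨D, hD⟩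
      obtain ⟨z, rfl⟩ := D.exists_rep
      have hzi : (z : V) ≠ i := by
        intro h
        exact hD (by rw [hCi]; exact congrArg _ (Subtype.ext h))
      have hzA : (z : V) ∈ (↑A : Set V) := by
        have := z.2
        simp only [Finset.coe_insert, Set.mem_insert_iff, Finset.mem_coe] at this ⊢
        tauto
      have hfz : f ⟨↑z, hzA⟩ = z := Subtype.ext rfl
      have hφz : φ (H0.connectedComponentMk ⟨↑z, hzA⟩) = H1.connectedComponentMk z := by
        rw [hφ, ConnectedComponent.map_mk, hfz]
      refine ⟨⟨H0.connectedComponentMk ⟨↑z, hzA⟩, ?_⟩, Subtype.ext hφz⟩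
      intro ht
      exact hD (by show H1.connectedComponentMk z = Ci; rw [← hφz]; exact (key _).2 ht)
  -- counting
  have hc1 : Nat.card H1.ConnectedComponent
      = Nat.card {D : H1.ConnectedComponent // D = Ci}
        + Nat.card {D : H1.ConnectedComponent // D ≠ Ci} :=
    (Nat.card_congr (Equiv.sumCompl (fun D => D = Ci))).symm.trans Nat.card_sum
  have hc2 : Nat.card {D : H1.ConnectedComponent // D = Ci} = 1 := by
    haveI : Unique {D : H1.ConnectedComponent // D = Ci} :=
      ⟨⟨⟨Ci, rfl⟩⟩, fun a => Subtype.ext a.2⟩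
    exact Nat.card_unique
  have hc3 : Nat.card {D : H1.ConnectedComponent // D ≠ Ci}
      = Nat.card {C : H0.ConnectedComponent // ¬ touch C} :=
    (Nat.card_congr (Equiv.ofBijective g hgbij)).symm
  have hc4 : Nat.card H0.ConnectedComponent
      = Nat.card {C : H0.ConnectedComponent // touch C}
        + Nat.card {C : H0.ConnectedComponent // ¬ touch C} :=
    (Nat.card_congr (Equiv.sumCompl (fun C => touch C))).symm.trans Nat.card_sum
  have hk : kappa' G i A = Nat.card {C : H0.ConnectedComponent // touch C} := rfl
  have hn1 : numClusters G (insert i A) = Nat.card H1.ConnectedComponent := rfl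
  have hn0 : numClusters G A = Nat.card H0.ConnectedComponent := rfl
  rw [hn1, hn0, hk, hc1, hc2, hc4, hc3]
  omega

lemma kappa'_le_degree [DecidableRel G.Adj] : kappa' G i A ≤ G.degree i := by
  classical
  have h1 : Nat.card {C : (SimpleGraph.induce (↑A : Set V) G).ConnectedComponent //
      ∃ y : (↑A : Set V), G.Adj i ↑y ∧
        (SimpleGraph.induce (↑A : Set V) G).connectedComponentMk y = C}
      ≤ Nat.card (G.neighborSet i) := by
    have hmap : ∀ C : {C : (SimpleGraph.induce (↑A : Set V) G).ConnectedComponent //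
        ∃ y : (↑A : Set V), G.Adj i ↑y ∧
          (SimpleGraph.induce (↑A : Set V) G).connectedComponentMk y = C},
        ∃ v : G.neighborSet i, ∃ hv : (↑v : V) ∈ (↑A : Set V),
          (SimpleGraph.induce (↑A : Set V) G).connectedComponentMk ⟨↑v, hv⟩ = C.1 := by
      rintro ⟨C, y, hadj, hmk⟩
      exact ⟨⟨↑y, hadj⟩, y.2, by simpa using hmk⟩
    choose v hv hmk using hmap
    apply Nat.card_le_card_of_injective v
    intro C C' h
    apply Subtype.ext
    rw [← hmk C, ← hmk C']
    congr 1
    exact Subtype.ext (congrArg (fun t : G.neighborSet i => (t : V)) h)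
  have h2 : Nat.card (G.neighborSet i) = G.degree i := by
    rw [Nat.card_eq_fintype_card, G.card_neighborSet_eq_degree]
  exact h1.trans_eq h2


lemma kappa_eq (G : SimpleGraph V) (i : V) (Y : Finset V) :
    kappa G i Y = kappa' G i (Y.erase i) := rfl

lemma siteWeight_pos (G : SimpleGraph V) {p : ℝ} (hp0 : 0 < p) (hp1 : p < 1) (Y : Finset V) :
    0 < siteWeight G p Y := by
  unfold siteWeight
  have h1 : (0:ℝ) < 1 - p := by linarith
  positivity

lemma weight_rel (G : SimpleGraph V) (p : ℝ) (i : V) (A : Finset V) (hiA : i ∉ A) :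
    siteWeight G p (insert i A) * ((1 - p) * 2 ^ kappa' G i A)
      = siteWeight G p A * (2 * p) := by
  have hcard : (insert i A).card = A.card + 1 := Finset.card_insert_of_notMem hiA
  have hlt : A.card < Fintype.card V := by
    rw [← Finset.card_univ]
    exact Finset.card_lt_card ⟨Finset.subset_univ A, fun h => hiA (h (Finset.mem_univ i))⟩
  have h1 : Fintype.card V - (A.card + 1) + 1 = Fintype.card V - A.card := by omega
  have h2 := count_eq G i A hiA
  unfold siteWeight
  rw [hcard]
  have e2 : (2:ℝ) ^ numClusters G A * 2 = 2 ^ numClusters G (insert i A) * 2 ^ kappa' G i A := by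
    rw [← pow_add, h2, pow_succ]
  have e1 : ((1:ℝ) - p) ^ (Fintype.card V - A.card)
      = (1 - p) ^ (Fintype.card V - (A.card + 1)) * (1 - p) := by
    rw [← pow_succ, h1]
  rw [e1, pow_succ]
  linear_combination (-(p ^ A.card * p * (1 - p) ^ (Fintype.card V - (A.card + 1)) * (1 - p))) * e2

end Graph

lemma dom_upper (q : ℝ) (hq0 : 0 < q) (hq1 : q < 1) (S : Finset V) :
    ∀ (f : Finset V → ℝ), Monotone f → ∀ (w : Finset V → ℝ),
      (∀ A ∈ S.powerset, 0 ≤ w A) →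
      (∀ i ∈ S, ∀ A ∈ (S.erase i).powerset, (1 - q) * w (insert i A) ≤ q * w A) →
      ∑ A ∈ S.powerset, w A * f A ≤
        (∑ A ∈ S.powerset, w A) *
          ∑ A ∈ S.powerset, (q ^ A.card * (1 - q) ^ (S.card - A.card)) * f A := by
  induction S using Finset.induction with
  | empty =>
    intro f _ w _ _
    simp
  | @insert i S hi IH =>
    intro f hf w hw hsite
    have hmemsub : ∀ A ∈ S.powerset, A ⊆ S := fun A hA => Finset.mem_powerset.1 hA
    have hins : ∀ A ∈ S.powerset, insert i A ∈ (insert i S).powerset := by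
      intro A hA
      exact Finset.mem_powerset.2 (Finset.insert_subset_insert i (hmemsub A hA))
    have hsub : ∀ A ∈ S.powerset, A ∈ (insert i S).powerset := by
      intro A hA
      exact Finset.mem_powerset.2 ((hmemsub A hA).trans (Finset.subset_insert i S))
    have herase : (insert i S).erase i = S := Finset.erase_insert hi
    -- the four sums over S
    set B0 := ∑ A ∈ S.powerset, (q ^ A.card * (1 - q) ^ (S.card - A.card)) * f A with hB0
    set B1 := ∑ A ∈ S.powerset, (q ^ A.card * (1 - q) ^ (S.card - A.card)) * f (insert i A) with hB1
    set W0 := ∑ A ∈ S.powerset, w A with hW0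
    set W1 := ∑ A ∈ S.powerset, w (insert i A) with hW1
    have hW0nn : 0 ≤ W0 := Finset.sum_nonneg fun A hA => hw A (hsub A hA)
    have hW1nn : 0 ≤ W1 := Finset.sum_nonneg fun A hA => hw _ (hins A hA)
    -- IH for f, w
    have I0 : ∑ A ∈ S.powerset, w A * f A ≤ W0 * B0 := by
      apply IH f hf w (fun A hA => hw A (hsub A hA))
      intro j hj A hA
      apply hsite j (Finset.mem_insert_of_mem hj)
      refine Finset.mem_powerset.2 ?_
      exact (Finset.mem_powerset.1 hA).trans (Finset.erase_subset_erase j (Finset.subset_insert i S))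
    -- IH for f ∘ insert i, w ∘ insert i
    have I1 : ∑ A ∈ S.powerset, w (insert i A) * f (insert i A) ≤ W1 * B1 := by
      apply IH (fun A => f (insert i A))
        (fun A B hAB => hf (Finset.insert_subset_insert i hAB)) (fun A => w (insert i A))
        (fun A hA => hw _ (hins A hA))
      intro j hj A hA
      have hij : i ≠ j := fun h => hi (h ▸ hj)
      have : insert i (insert j A) = insert j (insert i A) := Finset.insert_comm i j A
      rw [this]
      apply hsite j (Finset.mem_insert_of_mem hj)
      refine Finset.mem_powerset.2 ?_
      have hA' : A ⊆ S.erase j := Finset.mem_powerset.1 hA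
      intro x hx
      rcases Finset.mem_insert.1 hx with h | h
      · exact Finset.mem_erase.2 ⟨by simp [h]; exact hij, Finset.mem_insert.2 (Or.inl h)⟩
      · have := hA' h
        rw [Finset.mem_erase] at this ⊢
        exact ⟨this.1, Finset.mem_insert_of_mem this.2⟩
    -- site condition summed
    have hWle : (1 - q) * W1 ≤ q * W0 := by
      rw [hW0, hW1, Finset.mul_sum, Finset.mul_sum]
      apply Finset.sum_le_sum
      intro A hA
      apply hsite i (Finset.mem_insert_self i S)
      rw [herase]
      exact hA
    -- B0 ≤ B1
    have hBle : B0 ≤ B1 := by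
      apply Finset.sum_le_sum
      intro A hA
      have h1 : 0 ≤ q ^ A.card * (1 - q) ^ (S.card - A.card) :=
        mul_nonneg (pow_nonneg hq0.le _) (pow_nonneg (by linarith) _)
      exact mul_le_mul_of_nonneg_left (hf (Finset.subset_insert i A)) h1
    -- expand the sums over insert i S
    rw [Finset.sum_powerset_insert hi, Finset.sum_powerset_insert hi,
      Finset.sum_powerset_insert hi]
    have hcard : (insert i S).card = S.card + 1 := Finset.card_insert_of_notMem hi
    have hsplit :
        (∑ A ∈ S.powerset, (q ^ A.card * (1 - q) ^ ((insert i S).card - A.card)) * f A)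
          + ∑ A ∈ S.powerset,
              (q ^ (insert i A).card * (1 - q) ^ ((insert i S).card - (insert i A).card)) *
                f (insert i A)
        = (1 - q) * B0 + q * B1 := by
      rw [hB0, hB1, Finset.mul_sum, Finset.mul_sum]
      congr 1
      · apply Finset.sum_congr rfl
        intro A hA
        have hAS : A.card ≤ S.card := Finset.card_le_card (hmemsub A hA)
        rw [hcard]
        have : S.card + 1 - A.card = (S.card - A.card) + 1 := by omega
        rw [this, pow_succ]
        ring
      · apply Finset.sum_congr rfl
        intro A hA
        have hiA : i ∉ A := fun h => hi (hmemsub A hA h)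
        rw [hcard, Finset.card_insert_of_notMem hiA]
        have : S.card + 1 - (A.card + 1) = S.card - A.card := by omega
        rw [this, pow_succ]
        ring
    rw [hsplit]
    calc (∑ A ∈ S.powerset, w A * f A) + ∑ A ∈ S.powerset, w (insert i A) * f (insert i A)
        ≤ W0 * B0 + W1 * B1 := add_le_add I0 I1
      _ ≤ (W0 + W1) * ((1 - q) * B0 + q * B1) := by nlinarith [mul_le_mul_of_nonneg_left hBle hq0.le]

lemma dom_lower (q : ℝ) (hq0 : 0 < q) (hq1 : q < 1) (S : Finset V) :
    ∀ (f : Finset V → ℝ), Monotone f → ∀ (w : Finset V → ℝ),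
      (∀ A ∈ S.powerset, 0 ≤ w A) →
      (∀ i ∈ S, ∀ A ∈ (S.erase i).powerset, q * w A ≤ (1 - q) * w (insert i A)) →
      (∑ A ∈ S.powerset, w A) *
          ∑ A ∈ S.powerset, (q ^ A.card * (1 - q) ^ (S.card - A.card)) * f A ≤
        ∑ A ∈ S.powerset, w A * f A := by
  induction S using Finset.induction with
  | empty =>
    intro f _ w _ _
    simp
  | @insert i S hi IH =>
    intro f hf w hw hsite
    have hmemsub : ∀ A ∈ S.powerset, A ⊆ S := fun A hA => Finset.mem_powerset.1 hA
    have hins : ∀ A ∈ S.powerset, insert i A ∈ (insert i S).powerset := by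
      intro A hA
      exact Finset.mem_powerset.2 (Finset.insert_subset_insert i (hmemsub A hA))
    have hsub : ∀ A ∈ S.powerset, A ∈ (insert i S).powerset := by
      intro A hA
      exact Finset.mem_powerset.2 ((hmemsub A hA).trans (Finset.subset_insert i S))
    have herase : (insert i S).erase i = S := Finset.erase_insert hi
    -- the four sums over S
    set B0 := ∑ A ∈ S.powerset, (q ^ A.card * (1 - q) ^ (S.card - A.card)) * f A with hB0
    set B1 := ∑ A ∈ S.powerset, (q ^ A.card * (1 - q) ^ (S.card - A.card)) * f (insert i A) with hB1
    set W0 := ∑ A ∈ S.powerset, w A with hW0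
    set W1 := ∑ A ∈ S.powerset, w (insert i A) with hW1
    have hW0nn : 0 ≤ W0 := Finset.sum_nonneg fun A hA => hw A (hsub A hA)
    have hW1nn : 0 ≤ W1 := Finset.sum_nonneg fun A hA => hw _ (hins A hA)
    -- IH for f, w
    have I0 : W0 * B0 ≤ ∑ A ∈ S.powerset, w A * f A := by
      apply IH f hf w (fun A hA => hw A (hsub A hA))
      intro j hj A hA
      apply hsite j (Finset.mem_insert_of_mem hj)
      refine Finset.mem_powerset.2 ?_
      exact (Finset.mem_powerset.1 hA).trans (Finset.erase_subset_erase j (Finset.subset_insert i S))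
    -- IH for f ∘ insert i, w ∘ insert i
    have I1 : W1 * B1 ≤ ∑ A ∈ S.powerset, w (insert i A) * f (insert i A) := by
      apply IH (fun A => f (insert i A))
        (fun A B hAB => hf (Finset.insert_subset_insert i hAB)) (fun A => w (insert i A))
        (fun A hA => hw _ (hins A hA))
      intro j hj A hA
      have hij : i ≠ j := fun h => hi (h ▸ hj)
      have : insert i (insert j A) = insert j (insert i A) := Finset.insert_comm i j A
      rw [this]
      apply hsite j (Finset.mem_insert_of_mem hj)
      refine Finset.mem_powerset.2 ?_
      have hA' : A ⊆ S.erase j := Finset.mem_powerset.1 hA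
      intro x hx
      rcases Finset.mem_insert.1 hx with h | h
      · exact Finset.mem_erase.2 ⟨by simp [h]; exact hij, Finset.mem_insert.2 (Or.inl h)⟩
      · have := hA' h
        rw [Finset.mem_erase] at this ⊢
        exact ⟨this.1, Finset.mem_insert_of_mem this.2⟩
    -- site condition summed
    have hWle : q * W0 ≤ (1 - q) * W1 := by
      rw [hW0, hW1, Finset.mul_sum, Finset.mul_sum]
      apply Finset.sum_le_sum
      intro A hA
      apply hsite i (Finset.mem_insert_self i S)
      rw [herase]
      exact hA
    -- B0 ≤ B1
    have hBle : B0 ≤ B1 := by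
      apply Finset.sum_le_sum
      intro A hA
      have h1 : 0 ≤ q ^ A.card * (1 - q) ^ (S.card - A.card) :=
        mul_nonneg (pow_nonneg hq0.le _) (pow_nonneg (by linarith) _)
      exact mul_le_mul_of_nonneg_left (hf (Finset.subset_insert i A)) h1
    -- expand the sums over insert i S
    rw [Finset.sum_powerset_insert hi, Finset.sum_powerset_insert hi,
      Finset.sum_powerset_insert hi]
    have hcard : (insert i S).card = S.card + 1 := Finset.card_insert_of_notMem hi
    have hsplit :
        (∑ A ∈ S.powerset, (q ^ A.card * (1 - q) ^ ((insert i S).card - A.card)) * f A)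
          + ∑ A ∈ S.powerset,
              (q ^ (insert i A).card * (1 - q) ^ ((insert i S).card - (insert i A).card)) *
                f (insert i A)
        = (1 - q) * B0 + q * B1 := by
      rw [hB0, hB1, Finset.mul_sum, Finset.mul_sum]
      congr 1
      · apply Finset.sum_congr rfl
        intro A hA
        have hAS : A.card ≤ S.card := Finset.card_le_card (hmemsub A hA)
        rw [hcard]
        have : S.card + 1 - A.card = (S.card - A.card) + 1 := by omega
        rw [this, pow_succ]
        ring
      · apply Finset.sum_congr rfl
        intro A hA
        have hiA : i ∉ A := fun h => hi (hmemsub A hA h)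
        rw [hcard, Finset.card_insert_of_notMem hiA]
        have : S.card + 1 - (A.card + 1) = S.card - A.card := by omega
        rw [this, pow_succ]
        ring
    rw [hsplit]
    calc (W0 + W1) * ((1 - q) * B0 + q * B1)
        ≤ W0 * B0 + W1 * B1 := by nlinarith [mul_le_mul_of_nonneg_left hBle hq0.le]
      _ ≤ (∑ A ∈ S.powerset, w A * f A) + ∑ A ∈ S.powerset, w (insert i A) * f (insert i A) :=
          add_le_add I0 I1

/-- **Single-site conditionals and stochastic comparison for the site random-cluster
measure.** On a finite graph of maximal degree `Δ`, the conditional probability that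
`i ∈ Y` given `Y ∖ {i}` equals `p / (p + (1-p)·2^{κ(i,Y)-1})`; consequently the site
random-cluster measure is stochastically dominated by Bernoulli site percolation with
parameter `p* = p/(p + (1-p)/2)` and stochastically dominates Bernoulli site
percolation with parameter `p_* = p/(p + (1-p)·2^{Δ-1})`. -/
theorem site_rc_conditionals_and_comparison
    (G : SimpleGraph V) [DecidableRel G.Adj] (Δ : ℕ) (hΔ : ∀ v : V, G.degree v ≤ Δ)
    (p : ℝ) (hp0 : 0 < p) (hp1 : p < 1) :
    (∀ (i : V) (Y : Finset V),
      siteWeight G p (insert i (Y.erase i)) /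
          (siteWeight G p (insert i (Y.erase i)) + siteWeight G p (Y.erase i)) =
        p / (p + (1 - p) * (2 : ℝ) ^ ((kappa G i Y : ℤ) - 1))) ∧
    (∀ f : Finset V → ℝ, Monotone f →
      ((∑ Y : Finset V, bernoulliSiteWeight (p / (p + (1 - p) * (2 : ℝ) ^ ((Δ : ℤ) - 1))) Y * f Y ≤
          (∑ Y : Finset V, siteWeight G p Y * f Y) / (∑ Y : Finset V, siteWeight G p Y)) ∧
        (∑ Y : Finset V, siteWeight G p Y * f Y) / (∑ Y : Finset V, siteWeight G p Y) ≤
          ∑ Y : Finset V, bernoulliSiteWeight (p / (p + (1 - p) / 2)) Y * f Y)) := by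
  have hp1' : (0:ℝ) < 1 - p := by linarith
  constructor
  · -- part 1: the conditional formula
    intro i Y
    set A := Y.erase i with hA
    have hiA : i ∉ A := Finset.notMem_erase i Y
    set W1 := siteWeight G p (insert i A) with hW1
    set W0 := siteWeight G p A with hW0
    have hW1pos : 0 < W1 := siteWeight_pos G hp0 hp1 _
    have hW0pos : 0 < W0 := siteWeight_pos G hp0 hp1 _
    have rel := weight_rel G p i A hiA
    set c := (1 - p) * (2:ℝ) ^ kappa' G i A with hc
    have hcpos : 0 < c := by positivity
    have hzc : (1 - p) * (2:ℝ) ^ ((kappa G i Y : ℤ) - 1) = c / 2 := by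
      rw [kappa_eq, zpow_sub₀ (two_ne_zero), zpow_natCast, zpow_one, hc]
      ring
    rw [hzc, div_eq_div_iff (by linarith) (by positivity)]
    linear_combination rel / 2
  · -- part 2: stochastic comparison
    intro f hf
    have hTot : 0 < ∑ Y : Finset V, siteWeight G p Y := by
      apply Finset.sum_pos (fun Y _ => siteWeight_pos G hp0 hp1 Y) ⟨∅, Finset.mem_univ _⟩
    constructor
    · -- lower bound : Bernoulli p_* ≤ ψ
      set q := p / (p + (1 - p) * (2 : ℝ) ^ ((Δ : ℤ) - 1)) with hq
      have hzpos : (0:ℝ) < (2 : ℝ) ^ ((Δ : ℤ) - 1) := by positivity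
      have hcpos : (0:ℝ) < (1 - p) * (2 : ℝ) ^ ((Δ : ℤ) - 1) := by positivity
      have hDpos : (0:ℝ) < p + (1 - p) * (2 : ℝ) ^ ((Δ : ℤ) - 1) := by linarith
      have hq0 : 0 < q := div_pos hp0 hDpos
      have hq1 : q < 1 := (div_lt_one hDpos).2 (by linarith)
      have hq' : 1 - q = ((1 - p) * (2 : ℝ) ^ ((Δ : ℤ) - 1)) /
          (p + (1 - p) * (2 : ℝ) ^ ((Δ : ℤ) - 1)) := by
        rw [hq]; field_simp; ring
      rw [le_div_iff₀ hTot]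
      have main := dom_lower q hq0 hq1 (Finset.univ : Finset V) f hf (siteWeight G p)
        (fun A _ => (siteWeight_pos G hp0 hp1 A).le)
        (fun i _ A hA => by
          have hiA : i ∉ A := fun h =>
            (Finset.mem_erase.1 ((Finset.mem_powerset.1 hA) h)).1 rfl
          have rel := weight_rel G p i A hiA
          have hκ : kappa' G i A ≤ Δ := (kappa'_le_degree G i A).trans (hΔ i)
          have hmono : (2:ℝ) ^ kappa' G i A ≤ 2 ^ Δ :=
            pow_le_pow_right₀ (by norm_num) hκ
          have h2Δ : ((2:ℝ) ^ Δ : ℝ) = 2 * (2 : ℝ) ^ ((Δ : ℤ) - 1) := by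
            rw [zpow_sub₀ (two_ne_zero), zpow_natCast, zpow_one]; ring
          have hWA := (siteWeight_pos G hp0 hp1 A).le
          have hWiA := (siteWeight_pos G hp0 hp1 (insert i A)).le
          have hint := mul_le_mul_of_nonneg_left hmono (mul_nonneg hp1'.le hWiA)
          rw [h2Δ] at hint
          have key : p * siteWeight G p A ≤
              ((1 - p) * (2 : ℝ) ^ ((Δ : ℤ) - 1)) * siteWeight G p (insert i A) := by
            nlinarith [hint, rel]
          have h1 : q * siteWeight G p A
              = (p * siteWeight G p A) / (p + (1 - p) * (2 : ℝ) ^ ((Δ : ℤ) - 1)) := by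
            rw [hq]; ring
          have h2 : (1 - q) * siteWeight G p (insert i A)
              = (((1 - p) * (2 : ℝ) ^ ((Δ : ℤ) - 1)) * siteWeight G p (insert i A)) /
                  (p + (1 - p) * (2 : ℝ) ^ ((Δ : ℤ) - 1)) := by
            rw [hq']; ring
          rw [h1, h2, div_le_div_iff₀ hDpos hDpos]
          nlinarith [mul_le_mul_of_nonneg_right key hDpos.le])
      rw [Finset.powerset_univ] at main
      have hBeq : (∑ A : Finset V,
            (q ^ A.card * (1 - q) ^ ((Finset.univ : Finset V).card - A.card)) * f A)
          = ∑ A : Finset V, bernoulliSiteWeight q A * f A :=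
        Finset.sum_congr rfl (fun A _ => by unfold bernoulliSiteWeight; rw [Finset.card_univ])
      rw [hBeq] at main
      exact (mul_comm (∑ Y : Finset V, bernoulliSiteWeight q Y * f Y)
        (∑ Y : Finset V, siteWeight G p Y)).trans_le main
    · -- upper bound : ψ ≤ Bernoulli p*
      set q := p / (p + (1 - p) / 2) with hq
      have hDpos : (0:ℝ) < p + (1 - p) / 2 := by linarith
      have hq0 : 0 < q := div_pos hp0 hDpos
      have hq1 : q < 1 := (div_lt_one hDpos).2 (by linarith)
      have hq' : 1 - q = ((1 - p) / 2) / (p + (1 - p) / 2) := by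
        rw [hq]; field_simp; ring
      rw [div_le_iff₀ hTot]
      have main := dom_upper q hq0 hq1 (Finset.univ : Finset V) f hf (siteWeight G p)
        (fun A _ => (siteWeight_pos G hp0 hp1 A).le)
        (fun i _ A hA => by
          have hiA : i ∉ A := fun h =>
            (Finset.mem_erase.1 ((Finset.mem_powerset.1 hA) h)).1 rfl
          have rel := weight_rel G p i A hiA
          have hge : (1:ℝ) ≤ 2 ^ kappa' G i A := one_le_pow₀ (by norm_num)
          have hWA := (siteWeight_pos G hp0 hp1 A).le
          have hWiA := (siteWeight_pos G hp0 hp1 (insert i A)).le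
          have key : ((1 - p) / 2) * siteWeight G p (insert i A)
              ≤ p * siteWeight G p A := by
            nlinarith [mul_le_mul_of_nonneg_left hge (mul_nonneg hp1'.le hWiA)]
          have h1 : q * siteWeight G p A = (p * siteWeight G p A) / (p + (1 - p) / 2) := by
            rw [hq]; ring
          have h2 : (1 - q) * siteWeight G p (insert i A)
              = (((1 - p) / 2) * siteWeight G p (insert i A)) / (p + (1 - p) / 2) := by
            rw [hq']; ring
          rw [h1, h2, div_le_div_iff₀ hDpos hDpos]
          nlinarith [mul_le_mul_of_nonneg_right key hDpos.le])
      rw [Finset.powerset_univ] at main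
      have hBeq : (∑ A : Finset V,
            (q ^ A.card * (1 - q) ^ ((Finset.univ : Finset V).card - A.card)) * f A)
          = ∑ A : Finset V, bernoulliSiteWeight q A * f A :=
        Finset.sum_congr rfl (fun A _ => by unfold bernoulliSiteWeight; rw [Finset.card_univ])
      rw [hBeq] at main
      exact main.trans_eq (mul_comm _ _)

end SiteRC
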